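/- Let R be a commutative Noetherian ring, M a finitely generated R-module, and let 0 → K → P → M → 0 be any short exact sequence of R-modules with P finitely generated projective. Then ann_R Ext^1_R(M, K) equals the set {x ∈ R : the multiplication map x·id_M : M → M factors through some finitely generated free R-module}; in particular, ann_R Ext^1_R(M, K) is independent of the choice of the projective presentation. -/

import Mathlib

open CategoryTheory Opposite

universe u

namespace AnnExtAux

open CategoryTheory Limits Projective

variable {R : Type u} [CommRing R]
variable {M K P : Type u} [AddCommGroup M] [Module R M] [AddCommGroup K] [Module R K]
  [AddCommGroup P] [Module R P]

noncomputable section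

set_option linter.unusedSectionVars false

/-- annihilators agree across a linear equivalence -/
lemma ann_congr {A B : Type u} [AddCommGroup A] [Module R A] [AddCommGroup B] [Module R B]
    (e : A ≃ₗ[R] B) : Module.annihilator R A = Module.annihilator R B := by
  ext x
  simp only [Module.mem_annihilator]
  constructor
  · intro h b
    have := congrArg e (h (e.symm b))
    simpa [map_smul] using this
  · intro h a
    have := congrArg e.symm (h (e a))
    simpa [map_smul] using this

variable [Module.Projective R P]

instance : Projective (ModuleCat.of R P) :=
  (IsProjective.iff_projective P).mp inferInstance

variable (ι : K →ₗ[R] P) (π : P →ₗ[R] M)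

/-- The projective resolution complex of `M` starting with `P`. -/
def cplx : ChainComplex (ModuleCat.{u} R) ℕ :=
  ChainComplex.mk' (ModuleCat.of R P) (Projective.over (ModuleCat.of R K))
    (Projective.π (ModuleCat.of R K) ≫ ModuleCat.ofHom ι)
    (fun f => ⟨_, Projective.d f, (Category.assoc _ _ _).trans
      ((congrArg (Projective.π (kernel f) ≫ ·) (kernel.condition f)).trans Limits.comp_zero)⟩)

lemma cplx_d_1_0 :
    (cplx ι).d 1 0 = Projective.π (ModuleCat.of R K) ≫ ModuleCat.ofHom ι := by
  simp [cplx]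

instance cplx_projective (n : ℕ) : Projective ((cplx ι).X n) := by
  obtain (_ | _ | _ | n) := n
  · exact (IsProjective.iff_projective P).mp inferInstance
  all_goals apply Projective.projective_over

lemma cplx_exactAt_succ (n : ℕ) : (cplx ι).ExactAt (n + 1) := by
  rw [HomologicalComplex.exactAt_iff' _ (n + 1 + 1) (n + 1) n (by simp) (by simp)]
  match n with
  | 0 =>
    dsimp [cplx, HomologicalComplex.sc', HomologicalComplex.shortComplexFunctor',
      ChainComplex.mk', ChainComplex.mk]
    apply exact_d_f
  | n + 1 =>
    have key := exact_d_f (C := ModuleCat.{u} R) ((cplx ι).d (n + 2) (n + 1))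
    refine (ShortComplex.exact_iff_of_iso ?_).2 key
    exact ShortComplex.isoMk (ChainComplex.mk'XIso (ModuleCat.of R P) (Projective.over (ModuleCat.of R K))
        (Projective.π (ModuleCat.of R K) ≫ ModuleCat.ofHom ι) (fun f => ⟨_, Projective.d f, (Category.assoc _ _ _).trans
          ((congrArg (Projective.π (kernel f) ≫ ·) (kernel.condition f)).trans Limits.comp_zero)⟩) (n + 1)) (Iso.refl _) (Iso.refl _)
      ((ChainComplex.mk'_d (ModuleCat.of R P) (Projective.over (ModuleCat.of R K))
        (Projective.π (ModuleCat.of R K) ≫ ModuleCat.ofHom ι) (fun f => ⟨_, Projective.d f, (Category.assoc _ _ _).trans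
          ((congrArg (Projective.π (kernel f) ≫ ·) (kernel.condition f)).trans Limits.comp_zero)⟩) (n + 1)).symm.trans (Category.comp_id _).symm)
      ((Category.id_comp _).trans (Category.comp_id _).symm)

variable {ι π}

lemma comp_eq_zero (hexact : Function.Exact ι π) :
    ModuleCat.ofHom ι ≫ ModuleCat.ofHom π = 0 := by
  ext k
  exact hexact.apply_apply_eq_zero k

/-- The projective resolution of `M` with `P` in degree 0. -/
def res (hexact : Function.Exact ι π) (hπ : Function.Surjective π) :
    ProjectiveResolution (ModuleCat.of R M) where
  complex := cplx ι
  π := (ChainComplex.toSingle₀Equiv _ _).symm ⟨ModuleCat.ofHom π, by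
        exact (congrArg (· ≫ ModuleCat.ofHom π) (cplx_d_1_0 (P := P) ι)).trans
          ((Category.assoc _ _ _).trans ((congrArg (Projective.π (ModuleCat.of R K) ≫ ·)
            (comp_eq_zero hexact)).trans Limits.comp_zero))⟩
  quasiIso := ⟨fun n => by
    cases n with
    | zero =>
      have hzero : (Projective.π (ModuleCat.of R K) ≫ ModuleCat.ofHom ι) ≫
          ModuleCat.ofHom π = 0 := by
        rw [Category.assoc, comp_eq_zero hexact, Limits.comp_zero]
      have hex : (ShortComplex.mk _ _ hzero).Exact := by
        rw [ShortComplex.moduleCat_exact_iff]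
        intro p hp
        obtain ⟨k, hk⟩ := (hexact p).1 hp
        obtain ⟨y, hy⟩ := (ModuleCat.epi_iff_surjective
          (Projective.π (ModuleCat.of R K))).1 inferInstance k
        refine ⟨y, ?_⟩
        show ι (Projective.π (ModuleCat.of R K) y) = p
        rw [hy, hk]
      have hepi : Epi (ShortComplex.mk _ _ hzero).g :=
        (ModuleCat.epi_iff_surjective (ModuleCat.ofHom π)).2 hπ
      rw [ChainComplex.quasiIsoAt₀_iff, ShortComplex.quasiIso_iff_of_zeros']
      · refine (ShortComplex.exact_and_epi_g_iff_of_iso ?_).2 ⟨hex, hepi⟩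
        exact ShortComplex.isoMk (Iso.refl _) (Iso.refl _) (Iso.refl _)
          ((Category.id_comp _).trans ((cplx_d_1_0 ι).symm.trans (Category.comp_id _).symm))
          ((Category.id_comp _).trans
            ((ChainComplex.toSingle₀Equiv_symm_apply_f_zero (C := cplx ι) (ModuleCat.ofHom π) _).symm.trans (Category.comp_id _).symm))
      all_goals rfl
    | succ n =>
      rw [quasiIsoAt_iff_exactAt']
      · exact cplx_exactAt_succ ι n
      · apply ChainComplex.exactAt_succ_single_obj⟩

/-- annihilator membership in the explicit homology of a short complex of modules -/
lemma mem_ann_moduleCatHomology_iff (S : ShortComplex (ModuleCat.{u} R)) (x : R) :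
    x ∈ Module.annihilator R S.moduleCatLeftHomologyData.H ↔
      ∀ b : S.X₂, S.g b = 0 → ∃ a : S.X₁, S.f a = x • b := by
  rw [Module.mem_annihilator]
  constructor
  · intro h b hb
    have h2 : x • (Submodule.Quotient.mk (p := LinearMap.range S.moduleCatToCycles) ⟨b, hb⟩) = 0 :=
      h _
    rw [← Submodule.Quotient.mk_smul, Submodule.Quotient.mk_eq_zero] at h2
    obtain ⟨a, ha⟩ := h2
    exact ⟨a, congrArg Subtype.val ha⟩
  · intro h m
    obtain ⟨⟨b, hb⟩, rfl⟩ := Submodule.Quotient.mk_surjective _ m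
    show x • (Submodule.Quotient.mk (p := LinearMap.range S.moduleCatToCycles) ⟨b, hb⟩) = 0
    rw [← Submodule.Quotient.mk_smul, Submodule.Quotient.mk_eq_zero]
    obtain ⟨a, ha⟩ := h b hb
    exact ⟨a, Subtype.ext ha⟩

lemma ann_ext_iff (hι : Function.Injective ι) (hexact : Function.Exact ι π)
    (hπ : Function.Surjective π) (x : R) :
    x ∈ Module.annihilator R
        (((Ext R (ModuleCat.{u} R) 1).obj (op (ModuleCat.of R M))).obj (ModuleCat.of R K)) ↔
      ∃ ψ : P →ₗ[R] K, ψ ∘ₗ ι = x • (LinearMap.id : K →ₗ[R] K) := by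
  set Kc := ModuleCat.of R K with hKc
  set D := (cplx ι).linearYonedaObj R Kc with hD
  set S := D.sc' 0 1 2 with hS
  have e : (((Ext R (ModuleCat.{u} R) 1).obj (op (ModuleCat.of R M))).obj Kc) ≃ₗ[R]
      S.moduleCatLeftHomologyData.H :=
    ((((res hexact hπ).isoExt 1 Kc) ≪≫ D.homologyIsoSc' 0 1 2 (by simp) (by simp))
        ≪≫ S.moduleCatHomologyIso).toLinearEquiv
  rw [ann_congr e, mem_ann_moduleCatHomology_iff]
  -- linear-map versions of the differentials and of the projection onto `K`
  let d10 : ↑((cplx ι).X 1) →ₗ[R] ↑((cplx ι).X 0) := ((cplx ι).d 1 0).hom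
  let d21 : ↑((cplx ι).X 2) →ₗ[R] ↑((cplx ι).X 1) := ((cplx ι).d 2 1).hom
  let p : ↑((cplx ι).X 1) →ₗ[R] K := (Projective.π Kc).hom
  -- exactness of the complex at degree 1, at the level of linear maps
  have hex1 : ((cplx ι).sc' 2 1 0).Exact := by
    have h0 := cplx_exactAt_succ (P := P) ι 0
    rwa [HomologicalComplex.exactAt_iff' _ 2 1 0 (by simp) (by simp)] at h0
  have hrange : LinearMap.range d21 = LinearMap.ker d10 :=
    hex1.moduleCat_range_eq_ker
  have hd10 : ∀ y, d10 y = ι (p y) := fun y =>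
    LinearMap.congr_fun (ModuleCat.hom_ext_iff.mp (cplx_d_1_0 ι)) y
  have hp : Function.Surjective p :=
    (ModuleCat.epi_iff_surjective (Projective.π Kc)).1 inferInstance
  have happg : ∀ (φ : (cplx ι).X 1 ⟶ Kc), S.g φ = (cplx ι).d 2 1 ≫ φ := fun _ => rfl
  have happf : ∀ (ψ : (cplx ι).X 0 ⟶ Kc), S.f ψ = (cplx ι).d 1 0 ≫ ψ := fun _ => rfl
  constructor
  · intro h
    have hcyc : S.g (Projective.π Kc) = 0 := by
      refine (happg _).trans ?_
      have hc : ((cplx ι).d 2 1 ≫ Projective.π Kc) ≫ ModuleCat.ofHom ι =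
          0 ≫ ModuleCat.ofHom ι := by
        exact (Category.assoc _ _ _).trans ((congrArg ((cplx ι).d 2 1 ≫ ·) (cplx_d_1_0 ι).symm).trans
          (((cplx ι).d_comp_d 2 1 0).trans Limits.zero_comp.symm))
      have hmono : Mono (ModuleCat.ofHom ι) := (ModuleCat.mono_iff_injective _).2 hι
      exact (cancel_mono (ModuleCat.ofHom ι)).1 hc
    obtain ⟨ψ, hψ⟩ := h (Projective.π Kc) hcyc
    replace hψ := (happf ψ).symm.trans hψ
    let ψ' : (cplx ι).X 0 ⟶ Kc := ψ
    have hψ' : (cplx ι).d 1 0 ≫ ψ' = x • (Projective.π Kc) := hψ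
    refine ⟨ψ'.hom, ?_⟩
    ext k
    obtain ⟨y, hy⟩ := hp k
    have h1 : ψ' (d10 y) = x • (p y) := LinearMap.congr_fun (ModuleCat.hom_ext_iff.mp hψ') y
    rw [hd10 y, hy] at h1
    exact h1
  · rintro ⟨ψ₀, hψ₀⟩ φ hφ
    replace hφ := (happg φ).symm.trans hφ
    let φ' : (cplx ι).X 1 ⟶ Kc := φ
    have hφ' : (cplx ι).d 2 1 ≫ φ' = 0 := hφ
    -- φ kills the kernel of `p`
    have hker : ∀ y, p y = 0 → φ' y = 0 := by
      intro y hy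
      have hy0 : y ∈ LinearMap.ker d10 := by
        rw [LinearMap.mem_ker, hd10 y, hy, map_zero]
        rfl
      rw [← hrange] at hy0
      obtain ⟨z, hz⟩ := hy0
      have h1 : φ' (d21 z) = 0 := LinearMap.congr_fun (ModuleCat.hom_ext_iff.mp hφ') z
      rwa [hz] at h1
    -- descend φ' to a map K →ₗ[R] K
    have hle : LinearMap.ker p ≤
        LinearMap.ker φ'.hom := fun y hy => hker y hy
    set eqv := LinearMap.quotKerEquivOfSurjective _ hp with heqv
    set φbar : K →ₗ[R] K :=
      (LinearMap.ker p).liftQ φ'.hom hle ∘ₗ eqv.symm.toLinearMap with hφbar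
    have hφbar_p : ∀ y, φbar (p y) = φ' y := by
      intro y
      have h1 : eqv.symm (p y) = Submodule.Quotient.mk y := by
        rw [LinearEquiv.symm_apply_eq]
        rfl
      simp only [hφbar, LinearMap.comp_apply, LinearEquiv.coe_coe, h1, Submodule.liftQ_apply]
    let Ψ : (cplx ι).X 0 ⟶ Kc := ModuleCat.ofHom (φbar.comp ψ₀ : P →ₗ[R] K)
    refine ⟨Ψ, ?_⟩
    refine (happf Ψ).trans ?_
    show (cplx ι).d 1 0 ≫ Ψ = x • φ'
    ext y
    show φbar (ψ₀ (d10 y)) = (x • φ') y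
    rw [hd10 y]
    have h2 : ψ₀ (ι (p y)) = x • (p y) :=
      LinearMap.congr_fun hψ₀ (p y)
    rw [h2, map_smul, hφbar_p]
    rfl

lemma psi_iff_g (hι : Function.Injective ι) (hexact : Function.Exact ι π)
    (hπ : Function.Surjective π) (x : R) :
    (∃ ψ : P →ₗ[R] K, ψ ∘ₗ ι = x • (LinearMap.id : K →ₗ[R] K)) ↔
      ∃ g : M →ₗ[R] P, π ∘ₗ g = x • (LinearMap.id : M →ₗ[R] M) := by
  constructor
  · rintro ⟨ψ, hψ⟩
    set h : P →ₗ[R] P := x • LinearMap.id - ι ∘ₗ ψ with hh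
    have hker : LinearMap.ker π ≤ LinearMap.ker h := by
      intro q hq
      rw [LinearMap.mem_ker] at hq
      obtain ⟨k, rfl⟩ := (hexact q).1 hq
      have h1 : ψ (ι k) = x • k := LinearMap.congr_fun hψ k
      simp [hh, h1, LinearMap.sub_apply, map_smul]
    set eqv := LinearMap.quotKerEquivOfSurjective π hπ with heqv
    refine ⟨(LinearMap.ker π).liftQ h hker ∘ₗ eqv.symm.toLinearMap, ?_⟩
    ext m
    obtain ⟨q, rfl⟩ := hπ m
    have h1 : eqv.symm (π q) = Submodule.Quotient.mk q := by
      rw [LinearEquiv.symm_apply_eq]; rfl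
    simp only [LinearMap.comp_apply, LinearEquiv.coe_coe, h1, Submodule.liftQ_apply,
      LinearMap.smul_apply, LinearMap.id_apply]
    simp [hh, map_sub, map_smul, hexact.apply_apply_eq_zero]
  · rintro ⟨g, hg⟩
    set h : P →ₗ[R] P := x • LinearMap.id - g ∘ₗ π with hh
    have hmem : ∀ q, h q ∈ LinearMap.range ι := by
      intro q
      rw [LinearMap.mem_range]
      have h0 : π (h q) = 0 := by
        have h1 : π (g (π q)) = x • π q := LinearMap.congr_fun hg (π q)
        simp [hh, map_sub, map_smul, h1]
      have h2 := (hexact (h q)).1 h0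
      exact h2.imp (fun k hk => hk)
    set e := LinearEquiv.ofInjective ι hι with he
    set hres : P →ₗ[R] LinearMap.range ι := h.codRestrict (LinearMap.range ι) hmem
      with hhres
    refine ⟨e.symm.toLinearMap ∘ₗ hres, ?_⟩
    ext k
    have h0 : hres (ι k) = e (x • k) := by
      apply Subtype.ext
      have hπι : π (ι k) = 0 := hexact.apply_apply_eq_zero k
      show h (ι k) = ↑(e (x • k))
      rw [he]
      simp [hh, hπι, map_smul, LinearMap.sub_apply]
    show e.symm (hres (ι k)) = (x • (LinearMap.id : K →ₗ[R] K)) k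
    rw [h0, LinearEquiv.symm_apply_apply]
    rfl

lemma g_iff_factor [Module.Finite R P] (hπ : Function.Surjective π) (x : R) :
    (∃ g : M →ₗ[R] P, π ∘ₗ g = x • (LinearMap.id : M →ₗ[R] M)) ↔
      ∃ (n : ℕ) (g : M →ₗ[R] (Fin n → R)) (f : (Fin n → R) →ₗ[R] M),
        f ∘ₗ g = x • (LinearMap.id : M →ₗ[R] M) := by
  constructor
  · rintro ⟨g, hg⟩
    obtain ⟨n, q, hq⟩ := Module.Finite.exists_fin' R P
    obtain ⟨s, hs⟩ := Module.projective_lifting_property q LinearMap.id hq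
    refine ⟨n, s ∘ₗ g, π ∘ₗ q, ?_⟩
    rw [← hg]
    ext m
    have h1 : q (s (g m)) = g m := LinearMap.congr_fun hs (g m)
    simp [LinearMap.comp_apply, h1]
  · rintro ⟨n, g, f, hfg⟩
    obtain ⟨h, hh⟩ := Module.projective_lifting_property π f hπ
    refine ⟨h ∘ₗ g, ?_⟩
    rw [← hfg]
    ext m
    have h1 : π (h (g m)) = f (g m) := LinearMap.congr_fun hh (g m)
    simp [LinearMap.comp_apply, h1]

end

end AnnExtAux

/-- Let `R` be a commutative Noetherian ring, `M` a finitely generated `R`-module, and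
`0 → K → P → M → 0` a short exact sequence with `P` finitely generated projective.  Then the
annihilator of `Ext¹_R(M, K)` equals the set of `x ∈ R` such that multiplication by `x` on `M`
factors through a finitely generated free `R`-module; in particular it is independent of the
chosen projective presentation. -/
theorem ann_ext_one_syzygy_eq_factoring_set (R : Type u) [CommRing R] [IsNoetherianRing R]
    (M : Type u) [AddCommGroup M] [Module R M] [Module.Finite R M]
    (K P : Type u) [AddCommGroup K] [Module R K] [AddCommGroup P] [Module R P]
    [Module.Finite R P] [Module.Projective R P]
    (ι : K →ₗ[R] P) (π : P →ₗ[R] M)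
    (hι : Function.Injective ι) (hexact : Function.Exact ι π)
    (hπ : Function.Surjective π) :
    ∀ x : R,
      x ∈ Module.annihilator R
          (((Ext R (ModuleCat.{u} R) 1).obj (op (ModuleCat.of R M))).obj (ModuleCat.of R K)) ↔
      ∃ (n : ℕ) (g : M →ₗ[R] (Fin n → R)) (f : (Fin n → R) →ₗ[R] M),
        f ∘ₗ g = x • (LinearMap.id : M →ₗ[R] M) := by
  intro x
  rw [AnnExtAux.ann_ext_iff hι hexact hπ x, AnnExtAux.psi_iff_g hι hexact hπ x,
    AnnExtAux.g_iff_factor hπ x]
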